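/- Let (ξ_i, 𝔉_i) be square-integrable martingale differences, S_n = Σ ξ_i, and B_n(y) = Σ ξ_i² 1_{ξ_i > y} + Σ E[ξ_i² 1_{ξ_i ≤ y} | 𝔉_{i-1}]. Then for all x, y ≥ 0 and every p > 1, P(S_n ≥ x B_n(y)) ≤ (E[exp{-(p-1) f(x,y) B_n(y)} 1_{S_n ≥ x B_n(y)}])^{1/p}, where f(x,y) = (xy(ln(xy+1) - 1) + ln(xy+1))/y² with f(x,0) = x²/2. -/

import Mathlib

open MeasureTheory Real Finset

/-- The optimized Legendre-type exponent, with convention f(x,0) = x²/2. -/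
noncomputable def f (x y : ℝ) : ℝ :=
  if y = 0 then x ^ 2 / 2
  else (x * y * (Real.log (x * y + 1) - 1) + Real.log (x * y + 1)) / y ^ 2

open ENNReal NNReal


private lemma hd_quad (t : ℝ) : HasDerivAt (fun s : ℝ => Real.exp s - (1 + s + s ^ 2 / 2))
    (Real.exp t - (1 + t)) t := by
  have h1 : HasDerivAt (fun s : ℝ => Real.exp s - (1 + s + s ^ 2 / 2))
      (Real.exp t - (0 + 1 + 2 * t ^ 1 / 2)) t :=
    (Real.hasDerivAt_exp t).sub
      (((hasDerivAt_const t (1:ℝ)).add (hasDerivAt_id t)).add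
        (((hasDerivAt_pow 2 t)).div_const 2))
  convert h1 using 1; ring

lemma exp_le_quad_of_nonpos {s : ℝ} (hs : s ≤ 0) : Real.exp s ≤ 1 + s + s ^ 2 / 2 := by
  have hmono : Monotone (fun s : ℝ => Real.exp s - (1 + s + s ^ 2 / 2)) := by
    apply monotone_of_deriv_nonneg
    · intro t; exact (hd_quad t).differentiableAt
    · intro t; rw [(hd_quad t).deriv]
      have := Real.add_one_le_exp t; linarith
  have := hmono hs
  simp only [Real.exp_zero] at this
  nlinarith [this]

/-- χ(t) = (t-1)e^t + 1 ≥ 0 for all t. -/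
lemma chi_nonneg (t : ℝ) : 0 ≤ (t - 1) * Real.exp t + 1 := by
  have hd : ∀ u : ℝ, HasDerivAt (fun s : ℝ => (s - 1) * Real.exp s + 1)
      (u * Real.exp u) u := by
    intro u
    have h1 : HasDerivAt (fun s : ℝ => (s - 1) * Real.exp s + 1) _ u := (((hasDerivAt_id u).sub_const 1).mul (Real.hasDerivAt_exp u)).add_const 1
    convert h1 using 1 <;> simp [id] <;> ring
  have key : ∀ u : ℝ, ((fun s : ℝ => (s - 1) * Real.exp s + 1) 0) ≤
      (fun s : ℝ => (s - 1) * Real.exp s + 1) u := by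
    intro u
    rcases le_total 0 u with hu | hu
    · have hmono : MonotoneOn (fun s : ℝ => (s - 1) * Real.exp s + 1) (Set.Ici 0) := by
        apply monotoneOn_of_deriv_nonneg (convex_Ici 0)
        · exact (Continuous.continuousOn (by continuity))
        · intro s hs; exact (hd s).differentiableAt.differentiableWithinAt
        · intro s hs; rw [(hd s).deriv]
          rw [interior_Ici] at hs
          exact mul_nonneg (le_of_lt hs) (Real.exp_pos s).le
      exact hmono (Set.self_mem_Ici) hu hu
    · have hanti : AntitoneOn (fun s : ℝ => (s - 1) * Real.exp s + 1) (Set.Iic 0) := by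
        apply antitoneOn_of_deriv_nonpos (convex_Iic 0)
        · exact (Continuous.continuousOn (by continuity))
        · intro s hs; exact (hd s).differentiableAt.differentiableWithinAt
        · intro s hs; rw [(hd s).deriv]
          rw [interior_Iic] at hs
          exact mul_nonpos_of_nonpos_of_nonneg hs.le (Real.exp_pos s).le
      exact hanti hu (Set.self_mem_Iic) hu
  have := key t
  simpa using this

/-- ψ(t) = (t-2)e^t + t + 2 is monotone, ψ(0)=0. -/
lemma psi_mono : Monotone (fun t : ℝ => (t - 2) * Real.exp t + t + 2) := by
  apply monotone_of_deriv_nonneg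
  · intro u
    exact ((((differentiable_id.sub_const 2).mul Real.differentiable_exp).add
      differentiable_id).add_const 2).differentiableAt
  · intro u
    have h1 : HasDerivAt (fun t : ℝ => (t - 2) * Real.exp t + t + 2)
        ((u - 1) * Real.exp u + 1) u := by
      have h0 : HasDerivAt (fun t : ℝ => (t - 2) * Real.exp t + t + 2) _ u := ((((hasDerivAt_id u).sub_const 2).mul (Real.hasDerivAt_exp u)).add
        (hasDerivAt_id u)).add_const 2
      convert h0 using 1 <;> simp [id] <;> ring
    rw [h1.deriv]
    have := chi_nonneg u
    nlinarith [Real.exp_pos u]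

lemma psi_nonneg {t : ℝ} (ht : 0 ≤ t) : 0 ≤ (t - 2) * Real.exp t + t + 2 := by
  have := psi_mono ht
  simpa using this

lemma psi_nonpos {t : ℝ} (ht : t ≤ 0) : (t - 2) * Real.exp t + t + 2 ≤ 0 := by
  have := psi_mono ht
  simpa using this

/-- φ(t) = (e^t - t - 1)/t², φ(0) = 1/2. -/
noncomputable def phi (t : ℝ) : ℝ :=
  if t = 0 then 1 / 2 else (Real.exp t - t - 1) / t ^ 2

lemma phi_eq {t : ℝ} (ht : t ≠ 0) : phi t = (Real.exp t - t - 1) / t ^ 2 := if_neg ht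

lemma phi_zero : phi 0 = 1 / 2 := if_pos rfl

lemma exp_eq_phi (t : ℝ) : Real.exp t = 1 + t + phi t * t ^ 2 := by
  rcases eq_or_ne t 0 with h | h
  · simp [h, phi_zero]
  · rw [phi_eq h, div_mul_cancel₀]
    · ring
    · positivity

lemma phi_nonneg (t : ℝ) : 0 ≤ phi t := by
  rcases eq_or_ne t 0 with h | h
  · rw [h, phi_zero]; norm_num
  · rw [phi_eq h]
    apply div_nonneg _ (by positivity)
    have := Real.add_one_le_exp t; linarith

lemma phi_le_half_of_nonpos {t : ℝ} (ht : t ≤ 0) : phi t ≤ 1 / 2 := by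
  rcases eq_or_ne t 0 with h | h
  · rw [h, phi_zero]
  · rw [phi_eq h]
    rw [div_le_iff₀ (by positivity)]
    have := exp_le_quad_of_nonpos ht
    nlinarith
 
lemma half_le_phi_of_nonneg {t : ℝ} (ht : 0 ≤ t) : 1 / 2 ≤ phi t := by
  rcases eq_or_ne t 0 with h | h
  · rw [h, phi_zero]
  · rw [phi_eq h]
    rw [le_div_iff₀ (by positivity)]
    have := Real.quadratic_le_exp_of_nonneg ht
    nlinarith

private lemma phi_hasDeriv {t : ℝ} (ht : t ≠ 0) :
    HasDerivAt (fun s : ℝ => (Real.exp s - s - 1) / s ^ 2)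
      (((t - 2) * Real.exp t + t + 2) / t ^ 3) t := by
  have h1 : HasDerivAt (fun s : ℝ => Real.exp s - s - 1) (Real.exp t - 1) t := by
    have := ((Real.hasDerivAt_exp t).sub (hasDerivAt_id t)).sub_const 1
    simpa using this
  have h2 : HasDerivAt (fun s : ℝ => s ^ 2) (2 * t ^ 1) t := hasDerivAt_pow 2 t
  have h3 : HasDerivAt (fun s : ℝ => (Real.exp s - s - 1) / s ^ 2) _ t := h1.div h2 (by simpa using pow_ne_zero 2 ht)
  convert h3 using 1
  field_simp
  ring

lemma phi_mono_Ioi : MonotoneOn phi (Set.Ioi (0:ℝ)) := by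
  have h : MonotoneOn (fun s : ℝ => (Real.exp s - s - 1) / s ^ 2) (Set.Ioi (0:ℝ)) := by
    apply monotoneOn_of_deriv_nonneg (convex_Ioi 0)
    · apply ContinuousOn.div (by fun_prop) (by fun_prop)
      intro s hs; simp only [Set.mem_Ioi] at hs; positivity
    · intro s hs
      rw [interior_Ioi] at hs
      exact (phi_hasDeriv (ne_of_gt hs)).differentiableAt.differentiableWithinAt
    · intro s hs
      rw [interior_Ioi] at hs
      simp only [Set.mem_Ioi] at hs
      rw [(phi_hasDeriv (ne_of_gt hs)).deriv]
      exact div_nonneg (psi_nonneg hs.le) (pow_nonneg hs.le 3)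
  intro a ha b hb hab
  rw [phi_eq (ne_of_gt ha), phi_eq (ne_of_gt hb)]
  exact h ha hb hab

lemma phi_mono_Iio : MonotoneOn phi (Set.Iio (0:ℝ)) := by
  have h : MonotoneOn (fun s : ℝ => (Real.exp s - s - 1) / s ^ 2) (Set.Iio (0:ℝ)) := by
    apply monotoneOn_of_deriv_nonneg (convex_Iio 0)
    · apply ContinuousOn.div (by fun_prop) (by fun_prop)
      intro s hs
      simp only [Set.mem_Iio] at hs
      exact pow_ne_zero 2 (ne_of_lt hs)
    · intro s hs
      rw [interior_Iio] at hs
      exact (phi_hasDeriv (ne_of_lt hs)).differentiableAt.differentiableWithinAt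
    · intro s hs
      rw [interior_Iio] at hs
      simp only [Set.mem_Iio] at hs
      rw [(phi_hasDeriv (ne_of_lt hs)).deriv]
      have h3 : s ^ 3 < 0 := by
        have := mul_pos (mul_pos (neg_pos.2 hs) (neg_pos.2 hs)) (neg_pos.2 hs)
        nlinarith
      have h4 := psi_nonpos hs.le
      rw [div_nonneg_iff]
      right
      exact ⟨h4, h3.le⟩
  intro a ha b hb hab
  rw [phi_eq (ne_of_lt ha), phi_eq (ne_of_lt hb)]
  exact h ha hb hab

lemma phi_mono : Monotone phi := by
  intro s t hst
  rcases lt_trichotomy s 0 with hs | hs | hs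
  · rcases lt_trichotomy t 0 with ht | ht | ht
    · exact phi_mono_Iio hs ht hst
    · rw [ht, phi_zero]; exact phi_le_half_of_nonpos hs.le
    · exact (phi_le_half_of_nonpos hs.le).trans (half_le_phi_of_nonneg ht.le)
  · subst hs
    rw [phi_zero]
    exact half_le_phi_of_nonneg hst
  · exact phi_mono_Ioi hs (lt_of_lt_of_le hs hst) hst

/-- t - t²/2 ≤ log(1+t) for t ≥ 0 -/
lemma sub_sq_le_log {t : ℝ} (ht : 0 ≤ t) : t - t ^ 2 / 2 ≤ Real.log (1 + t) := by
  have hd : ∀ u : ℝ, 0 ≤ u → HasDerivAt (fun s : ℝ => Real.log (1 + s) - (s - s ^ 2 / 2))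
      (1 / (1 + u) - (1 - 2 * u ^ 1 / 2)) u := by
    intro u hu
    have h1 : HasDerivAt (fun s : ℝ => 1 + s) (0 + 1) u :=
      (hasDerivAt_const u (1:ℝ)).add (hasDerivAt_id u)
    have h2 : HasDerivAt (fun s : ℝ => Real.log (1 + s)) ((0+1) / (1 + u)) u :=
      h1.log (by linarith)
    have h3 : HasDerivAt (fun s : ℝ => s - s ^ 2 / 2) (1 - 2 * u ^ 1 / 2) u :=
      (hasDerivAt_id u).sub ((hasDerivAt_pow 2 u).div_const 2)
    have h4 : HasDerivAt (fun s : ℝ => Real.log (1 + s) - (s - s ^ 2 / 2)) _ u := h2.sub h3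
    simpa using h4
  have hmono : MonotoneOn (fun s : ℝ => Real.log (1 + s) - (s - s ^ 2 / 2)) (Set.Ici 0) := by
    apply monotoneOn_of_deriv_nonneg (convex_Ici 0)
    · apply ContinuousOn.sub
      · apply ContinuousOn.log (by fun_prop)
        intro s hs; simp only [Set.mem_Ici] at hs; linarith
      · fun_prop
    · intro s hs
      rw [interior_Ici] at hs
      exact (hd s hs.le).differentiableAt.differentiableWithinAt
    · intro s hs
      rw [interior_Ici] at hs
      simp only [Set.mem_Ioi] at hs
      rw [(hd s hs.le).deriv]
      have h1 : (0:ℝ) < 1 + s := by linarith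
      have h2 : 1 - s ≤ 1 / (1 + s) := by
        rw [le_div_iff₀ h1]; nlinarith
      have h3 : (2:ℝ) * s ^ 1 / 2 = s := by ring
      linarith
  have := hmono Set.self_mem_Ici ht ht
  simp only [add_zero, Real.log_one] at this
  linarith

noncomputable def Lam (x y : ℝ) : ℝ := if y = 0 then x else Real.log (x * y + 1) / y

noncomputable def Ha (x y : ℝ) : ℝ := phi (Lam x y * y) * (Lam x y) ^ 2

lemma Lam_nonneg {x y : ℝ} (hx : 0 ≤ x) (hy : 0 ≤ y) : 0 ≤ Lam x y := by
  unfold Lam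
  split_ifs with h
  · exact hx
  · exact div_nonneg (Real.log_nonneg (by nlinarith)) hy

lemma Ha_nonneg (x y : ℝ) : 0 ≤ Ha x y :=
  mul_nonneg (phi_nonneg _) (sq_nonneg _)

lemma key1 {L y u : ℝ} (hL : 0 ≤ L) (hu : u ≤ y) :
    Real.exp (L * u) ≤ 1 + L * u + phi (L * y) * L ^ 2 * u ^ 2 := by
  have h1 := exp_eq_phi (L * u)
  have h2 : phi (L * u) ≤ phi (L * y) := phi_mono (mul_le_mul_of_nonneg_left hu hL)
  have h3 : 0 ≤ (phi (L * y) - phi (L * u)) * (L ^ 2 * u ^ 2) :=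
    mul_nonneg (sub_nonneg.2 h2) (by positivity)
  nlinarith [sq_nonneg (L * u)]

lemma key2 {L y u : ℝ} (hL : 0 ≤ L) (hy : 0 ≤ y) (hu : y < u) :
    Real.exp (L * u - phi (L * y) * L ^ 2 * u ^ 2) ≤ 1 + L * u := by
  have ht : 0 ≤ L * u := mul_nonneg hL (hy.trans hu.le)
  have hH : 1 / 2 ≤ phi (L * y) := half_le_phi_of_nonneg (mul_nonneg hL hy)
  have hlog := sub_sq_le_log ht
  have hexp : L * u - phi (L * y) * L ^ 2 * u ^ 2 ≤ Real.log (1 + L * u) := by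
    nlinarith [sq_nonneg (L * u), sq_nonneg u]
  calc Real.exp (L * u - phi (L * y) * L ^ 2 * u ^ 2) ≤ Real.exp (Real.log (1 + L * u)) :=
        Real.exp_le_exp.2 hexp
    _ = 1 + L * u := Real.exp_log (by linarith)

lemma f_eq {x y : ℝ} (hx : 0 ≤ x) (hy : 0 ≤ y) : f x y = Lam x y * x - Ha x y := by
  rcases eq_or_ne y 0 with h | h
  · subst h
    norm_num [f, Lam, Ha, phi_zero]
    ring
  · have hy0 : 0 < y := lt_of_le_of_ne hy (Ne.symm h)
    have hpos : (0:ℝ) < x * y + 1 := by nlinarith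
    set c := Real.log (x * y + 1) with hc
    have hLy : Lam x y * y = c := by rw [Lam, if_neg h]; field_simp; exact hc.symm
    have hphic : phi c * c ^ 2 = x * y - c := by
      have h1 := exp_eq_phi c
      rw [hc, Real.exp_log hpos] at h1
      rw [hc]
      linarith
    rw [f, if_neg h, Ha, hLy, Lam, if_neg h, ← hc, div_pow, mul_div_assoc', hphic]
    field_simp
    ring

lemma f_nonneg {x y : ℝ} (hx : 0 ≤ x) (hy : 0 ≤ y) : 0 ≤ f x y := by
  rcases eq_or_ne y 0 with h | h
  · subst h; rw [f, if_pos rfl]; positivity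
  · have hy0 : 0 < y := lt_of_le_of_ne hy (Ne.symm h)
    have hpos : (0:ℝ) < x * y + 1 := by nlinarith
    set c := Real.log (x * y + 1) with hc
    have h1 : -c + 1 ≤ Real.exp (-c) := Real.add_one_le_exp (-c)
    have h2 : Real.exp (-c) = (x * y + 1)⁻¹ := by
      rw [Real.exp_neg, hc, Real.exp_log hpos]
    rw [h2] at h1
    have h3 : (-c + 1) * (x * y + 1) ≤ 1 := by
      calc (-c + 1) * (x * y + 1) ≤ (x * y + 1)⁻¹ * (x * y + 1) :=
            mul_le_mul_of_nonneg_right h1 hpos.le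
        _ = 1 := inv_mul_cancel₀ (ne_of_gt hpos)
    rw [f, if_neg h]
    apply div_nonneg _ (by positivity)
    nlinarith

lemma keyA {x y u : ℝ} (hx : 0 ≤ x) (hy : 0 ≤ y) (hu : u ≤ y) :
    Real.exp (Lam x y * u) ≤ 1 + Lam x y * u + Ha x y * u ^ 2 := by
  unfold Ha
  exact key1 (Lam_nonneg hx hy) hu

lemma keyB {x y u : ℝ} (hx : 0 ≤ x) (hy : 0 ≤ y) (hu : y < u) :
    Real.exp (Lam x y * u - Ha x y * u ^ 2) ≤ 1 + Lam x y * u := by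
  unfold Ha
  exact key2 (Lam_nonneg hx hy) hy hu


lemma lintegral_mul_le_of_condexp_le_one {Ω : Type*} {m : MeasurableSpace Ω} {μ : Measure Ω}
    [IsProbabilityMeasure μ] {m' : MeasurableSpace Ω} (hm' : m' ≤ m)
    {φ G : Ω → ℝ} (hφmeas : StronglyMeasurable[m'] φ) (hφ : ∀ ω, 0 ≤ φ ω)
    (hG : ∀ ω, 0 ≤ G ω) (hGint : Integrable G μ)
    (hcond : μ[G | m'] ≤ᵐ[μ] 1) :
    ∫⁻ ω, ENNReal.ofReal (φ ω * G ω) ∂μ ≤ ∫⁻ ω, ENNReal.ofReal (φ ω) ∂μ := by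
  have hφm : StronglyMeasurable[m] φ := hφmeas.mono hm'
  -- truncations
  set φj : ℕ → Ω → ℝ := fun j ω => min (φ ω) j with hφj
  have hφjm : ∀ j, StronglyMeasurable[m'] (φj j) := fun j => hφmeas.inf stronglyMeasurable_const
  have hφjnn : ∀ j ω, 0 ≤ φj j ω := fun j ω => le_min (hφ ω) (Nat.cast_nonneg j)
  have hφjbd : ∀ j ω, φj j ω ≤ j := fun j ω => min_le_right _ _
  have hφjle : ∀ j ω, φj j ω ≤ φ ω := fun j ω => min_le_left _ _
  have hφjint : ∀ j, Integrable (φj j) μ := by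
    intro j
    refine Integrable.mono' (integrable_const (j:ℝ)) ((hφjm j).mono hm').aestronglyMeasurable ?_
    exact Filter.Eventually.of_forall fun ω => by
      rw [Real.norm_eq_abs, abs_of_nonneg (hφjnn j ω)]; exact hφjbd j ω
  have hprodint : ∀ j, Integrable (φj j * G) μ := by
    intro j
    refine hGint.bdd_mul (c := j) ((hφjm j).mono hm').aestronglyMeasurable (Filter.Eventually.of_forall fun ω => ?_)
    rw [Real.norm_eq_abs, abs_of_nonneg (hφjnn j ω)]; exact hφjbd j ω
  -- supremum representation
  have hsup : ∀ ω, (⨆ j : ℕ, ENNReal.ofReal (φj j ω * G ω)) = ENNReal.ofReal (φ ω * G ω) := by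
    intro ω
    apply le_antisymm
    · exact iSup_le fun j => ENNReal.ofReal_le_ofReal
        (mul_le_mul_of_nonneg_right (hφjle j ω) (hG ω))
    · refine le_iSup_of_le (Nat.ceil (φ ω)) (le_of_eq ?_)
      congr 1
      rw [hφj]
      simp only []
      rw [min_eq_left (Nat.le_ceil (φ ω))]
  have hmonoj : ∀ ω, Monotone fun j : ℕ => ENNReal.ofReal (φj j ω * G ω) := by
    intro ω a b hab
    exact ENNReal.ofReal_le_ofReal (mul_le_mul_of_nonneg_right
      (min_le_min le_rfl (Nat.cast_le.2 hab)) (hG ω))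
  calc ∫⁻ ω, ENNReal.ofReal (φ ω * G ω) ∂μ
      = ∫⁻ ω, ⨆ j : ℕ, ENNReal.ofReal (φj j ω * G ω) ∂μ := by
        congr 1; ext ω; rw [hsup ω]
    _ = ⨆ j : ℕ, ∫⁻ ω, ENNReal.ofReal (φj j ω * G ω) ∂μ := by
        refine lintegral_iSup' (fun j => ?_) (Filter.Eventually.of_forall hmonoj)
        exact (ENNReal.measurable_ofReal.comp_aemeasurable
          ((hprodint j).aestronglyMeasurable.aemeasurable))
    _ ≤ ∫⁻ ω, ENNReal.ofReal (φ ω) ∂μ := by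
        refine iSup_le fun j => ?_
        have h1 : ∫⁻ ω, ENNReal.ofReal (φj j ω * G ω) ∂μ
            = ENNReal.ofReal (∫ ω, (φj j * G) ω ∂μ) :=
          (ofReal_integral_eq_lintegral_ofReal (hprodint j)
            (Filter.Eventually.of_forall fun ω => mul_nonneg (hφjnn j ω) (hG ω))).symm
        rw [h1]
        have h2 : ∫ ω, (φj j * G) ω ∂μ = ∫ ω, (μ[φj j * G | m']) ω ∂μ :=
          (integral_condExp hm').symm
        have h3 : μ[φj j * G | m'] =ᵐ[μ] φj j * μ[G | m'] :=
          condExp_mul_of_stronglyMeasurable_left (hφjm j) (hprodint j) hGint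
        have h4 : ∫ ω, (μ[φj j * G | m']) ω ∂μ = ∫ ω, (φj j * μ[G | m']) ω ∂μ :=
          integral_congr_ae h3
        have h5 : ∫ ω, (φj j * μ[G | m']) ω ∂μ ≤ ∫ ω, φj j ω ∂μ := by
          refine integral_mono_ae ?_ (hφjint j) ?_
          · exact (integrable_condExp).bdd_mul (f := φj j)
              ((hφjm j).mono hm').aestronglyMeasurable
              (Filter.Eventually.of_forall fun ω => by
                rw [Real.norm_eq_abs, abs_of_nonneg (hφjnn j ω)]; exact hφjbd j ω)
          · filter_upwards [hcond] with ω hω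
            calc (φj j * μ[G|m']) ω = φj j ω * (μ[G|m']) ω := rfl
              _ ≤ φj j ω * 1 := mul_le_mul_of_nonneg_left hω (hφjnn j ω)
              _ = φj j ω := mul_one _
        have h6 : ENNReal.ofReal (∫ ω, φj j ω ∂μ) = ∫⁻ ω, ENNReal.ofReal (φj j ω) ∂μ :=
          ofReal_integral_eq_lintegral_ofReal (hφjint j)
            (Filter.Eventually.of_forall (hφjnn j))
        calc ENNReal.ofReal (∫ ω, (φj j * G) ω ∂μ)
            = ENNReal.ofReal (∫ ω, (μ[φj j * G | m']) ω ∂μ) := by rw [← h2]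
          _ = ENNReal.ofReal (∫ ω, (φj j * μ[G | m']) ω ∂μ) := by rw [h4]
          _ ≤ ENNReal.ofReal (∫ ω, φj j ω ∂μ) := ENNReal.ofReal_le_ofReal h5
          _ = ∫⁻ ω, ENNReal.ofReal (φj j ω) ∂μ := h6
          _ ≤ ∫⁻ ω, ENNReal.ofReal (φ ω) ∂μ :=
              lintegral_mono fun ω => ENNReal.ofReal_le_ofReal (hφjle j ω)

theorem stmt_5 {Ω : Type*} {m : MeasurableSpace Ω} {μ : Measure Ω} [IsProbabilityMeasure μ]
    (𝔉 : ℕ → MeasurableSpace Ω) (hle : ∀ i, 𝔉 i ≤ m) (hmono : Monotone 𝔉)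
    (ξ : ℕ → Ω → ℝ)
    (hadp : ∀ i, StronglyMeasurable[𝔉 i] (ξ i))
    (hsq : ∀ i, Integrable (fun ω => (ξ i ω) ^ 2) μ)
    (hmart : ∀ i : ℕ, 1 ≤ i → μ[ξ i | 𝔉 (i - 1)] =ᵐ[μ] 0)
    (n : ℕ) (x y : ℝ) (hx : 0 ≤ x) (hy : 0 ≤ y) (p : ℝ) (hp : 1 < p)
    (S B : Ω → ℝ)
    (hS : S = fun ω => ∑ i ∈ Finset.Icc 1 n, ξ i ω)
    (hB : B = fun ω =>
      (∑ i ∈ Finset.Icc 1 n, if y < ξ i ω then (ξ i ω) ^ 2 else 0)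
        + ∑ i ∈ Finset.Icc 1 n,
            (μ[fun ω' => if ξ i ω' ≤ y then (ξ i ω') ^ 2 else 0 | 𝔉 (i - 1)]) ω) :
    (μ {ω | x * B ω ≤ S ω}).toReal ≤
      (∫ ω in {ω | x * B ω ≤ S ω}, Real.exp (-(p - 1) * f x y * B ω) ∂μ) ^ (1 / p) := by
  classical
  have hL : 0 ≤ Lam x y := Lam_nonneg hx hy
  have hH : 0 ≤ Ha x y := Ha_nonneg x y
  set L := Lam x y with hLdef
  set H := Ha x y with hHdef
  set κ : ℕ → Ω → ℝ := fun i ω => if ξ i ω ≤ y then ξ i ω ^ 2 else 0 with hκdef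
  set τ : ℕ → Ω → ℝ := fun i ω => if y < ξ i ω then ξ i ω ^ 2 else 0 with hτdef
  set C : ℕ → Ω → ℝ := fun i => μ[κ i | 𝔉 (i - 1)] with hCdef
  set D : ℕ → Ω → ℝ := fun i ω => Real.exp (L * ξ i ω - H * τ i ω) with hDdef
  set G : ℕ → Ω → ℝ := fun i ω => Real.exp (-(H * C i ω)) * D i ω with hGdef
  set M : ℕ → Ω → ℝ := fun k ω => ∏ i ∈ Finset.Icc 1 k, G i ω with hMdef
  -- basic measurability and integrability
  have hξm : ∀ i, StronglyMeasurable[m] (ξ i) := fun i => (hadp i).mono (hle i)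
  have hξint : ∀ i, Integrable (ξ i) μ := by
    intro i
    refine Integrable.mono' ((integrable_const (1:ℝ)).add (hsq i))
      (hξm i).aestronglyMeasurable (Filter.Eventually.of_forall fun ω => ?_)
    simp only [Pi.add_apply]
    rw [Real.norm_eq_abs]
    nlinarith [sq_abs (ξ i ω), sq_nonneg (|ξ i ω| - 1)]
  have hκnn : ∀ i ω, 0 ≤ κ i ω := by
    intro i ω; rw [hκdef]; dsimp only; split_ifs <;> positivity
  have hτnn : ∀ i ω, 0 ≤ τ i ω := by
    intro i ω; rw [hτdef]; dsimp only; split_ifs <;> positivity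
  have hκm : ∀ i, StronglyMeasurable[𝔉 i] (κ i) := by
    intro i
    apply Measurable.stronglyMeasurable
    exact Measurable.ite (measurableSet_le (hadp i).measurable measurable_const)
      ((hadp i).measurable.pow_const 2) measurable_const
  have hτm : ∀ i, StronglyMeasurable[𝔉 i] (τ i) := by
    intro i
    apply Measurable.stronglyMeasurable
    exact Measurable.ite (measurableSet_lt measurable_const (hadp i).measurable)
      ((hadp i).measurable.pow_const 2) measurable_const
  have hκint : ∀ i, Integrable (κ i) μ := by
    intro i
    refine Integrable.mono' (hsq i) ((hκm i).mono (hle i)).aestronglyMeasurable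
      (Filter.Eventually.of_forall fun ω => ?_)
    rw [Real.norm_eq_abs, abs_of_nonneg (hκnn i ω), hκdef]
    dsimp only; split_ifs <;> [exact le_rfl; positivity]
  have hτint : ∀ i, Integrable (τ i) μ := by
    intro i
    refine Integrable.mono' (hsq i) ((hτm i).mono (hle i)).aestronglyMeasurable
      (Filter.Eventually.of_forall fun ω => ?_)
    rw [Real.norm_eq_abs, abs_of_nonneg (hτnn i ω), hτdef]
    dsimp only; split_ifs <;> [exact le_rfl; positivity]
  have hCm : ∀ i, StronglyMeasurable[𝔉 (i - 1)] (C i) := fun i => stronglyMeasurable_condExp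
  have hCint : ∀ i, Integrable (C i) μ := fun i => integrable_condExp
  have hCnn : ∀ i, 0 ≤ᵐ[μ] C i := fun i =>
    condExp_nonneg (Filter.Eventually.of_forall (hκnn i))
  -- key pointwise bound on D
  have hDkey : ∀ i ω, D i ω ≤ 1 + L * ξ i ω + H * κ i ω := by
    intro i ω
    rcases le_or_gt (ξ i ω) y with h | h
    · rw [hDdef, hτdef, hκdef]; dsimp only
      rw [if_neg (not_lt.2 h), if_pos h, mul_zero, sub_zero]
      exact keyA hx hy h
    · rw [hDdef, hτdef, hκdef]; dsimp only
      rw [if_pos h, if_neg (not_le.2 h), mul_zero, add_zero]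
      exact keyB hx hy h
  have hDpos : ∀ i ω, 0 < D i ω := fun i ω => Real.exp_pos _
  have hDm : ∀ i, StronglyMeasurable[m] (D i) := by
    intro i
    apply Measurable.stronglyMeasurable
    exact ((measurable_const.mul (hξm i).measurable).sub
      (measurable_const.mul ((hτm i).mono (hle i)).measurable)).exp
  have hbound_int : ∀ i, Integrable (fun ω => 1 + L * ξ i ω + H * κ i ω) μ := by
    intro i
    exact ((integrable_const (1:ℝ)).add ((hξint i).const_mul L)).add ((hκint i).const_mul H)
  have hDint : ∀ i, Integrable (D i) μ := by
    intro i
    refine Integrable.mono' (hbound_int i) (hDm i).aestronglyMeasurable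
      (Filter.Eventually.of_forall fun ω => ?_)
    rw [Real.norm_eq_abs, abs_of_pos (hDpos i ω)]
    exact hDkey i ω
  have hGpos : ∀ i ω, 0 < G i ω := fun i ω =>
    mul_pos (Real.exp_pos _) (hDpos i ω)
  have hGm : ∀ i, StronglyMeasurable[m] (G i) := by
    intro i
    apply Measurable.stronglyMeasurable
    refine Measurable.mul ?_ (hDm i).measurable
    exact ((measurable_const.mul ((hCm i).mono ((hle _))).measurable).neg).exp
  have hGint : ∀ i, Integrable (G i) μ := by
    intro i
    refine Integrable.mono' (hDint i) (hGm i).aestronglyMeasurable ?_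
    filter_upwards [hCnn i] with ω hω
    rw [Real.norm_eq_abs, abs_of_pos (hGpos i ω), hGdef]
    dsimp only
    have h1 : Real.exp (-(H * C i ω)) ≤ 1 := by
      rw [Real.exp_le_one_iff]
      simp only [neg_nonpos]
      exact mul_nonneg hH hω
    calc Real.exp (-(H * C i ω)) * D i ω ≤ 1 * D i ω :=
          mul_le_mul_of_nonneg_right h1 (hDpos i ω).le
      _ = D i ω := one_mul _
  -- conditional expectation bound
  have hGcond : ∀ i, 1 ≤ i → μ[G i | 𝔉 (i - 1)] ≤ᵐ[μ] 1 := by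
    intro i hi
    have hfm' : StronglyMeasurable[𝔉 (i - 1)] (fun ω => Real.exp (-(H * C i ω))) :=
      (Real.continuous_exp.comp_stronglyMeasurable ((hCm i).const_mul H).neg)
    have hpull : μ[G i | 𝔉 (i - 1)] =ᵐ[μ]
        (fun ω => Real.exp (-(H * C i ω))) * μ[D i | 𝔉 (i - 1)] := by
      have heq : G i = (fun ω => Real.exp (-(H * C i ω))) * D i := by
        rw [hGdef]
        rfl
      rw [heq]
      exact condExp_mul_of_stronglyMeasurable_left hfm'
        (by rw [← heq]; exact hGint i) (hDint i)
    have hcondD : μ[D i | 𝔉 (i - 1)] ≤ᵐ[μ] fun ω => 1 + H * C i ω := by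
      have h1 : μ[D i | 𝔉 (i - 1)] ≤ᵐ[μ]
          μ[fun ω => 1 + L * ξ i ω + H * κ i ω | 𝔉 (i - 1)] :=
        condExp_mono (hDint i) (hbound_int i)
          (Filter.Eventually.of_forall (hDkey i))
      have h2 : μ[fun ω => 1 + L * ξ i ω + H * κ i ω | 𝔉 (i - 1)] =ᵐ[μ]
          fun ω => 1 + H * C i ω := by
        have ha : (fun ω => 1 + L * ξ i ω + H * κ i ω)
            = (fun ω => 1 + L * ξ i ω) + fun ω => H * κ i ω := rfl
        have hb : (fun ω => (1:ℝ) + L * ξ i ω)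
            = (fun _ => (1:ℝ)) + fun ω => L * ξ i ω := rfl
        have h3 : μ[fun ω => 1 + L * ξ i ω + H * κ i ω | 𝔉 (i - 1)] =ᵐ[μ]
            μ[fun ω => 1 + L * ξ i ω | 𝔉 (i - 1)] + μ[fun ω => H * κ i ω | 𝔉 (i - 1)] := by
          rw [ha]
          exact condExp_add ((integrable_const (1:ℝ)).add ((hξint i).const_mul L))
            ((hκint i).const_mul H) _
        have h4 : μ[fun ω => (1:ℝ) + L * ξ i ω | 𝔉 (i - 1)] =ᵐ[μ]
            μ[fun _ => (1:ℝ) | 𝔉 (i - 1)] + μ[fun ω => L * ξ i ω | 𝔉 (i - 1)] := by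
          rw [hb]
          exact condExp_add (integrable_const (1:ℝ)) ((hξint i).const_mul L) _
        have h5 : μ[fun _ => (1:ℝ) | 𝔉 (i - 1)] = fun _ => (1:ℝ) :=
          condExp_const (hle _) 1
        have h6 : μ[fun ω => L * ξ i ω | 𝔉 (i - 1)] =ᵐ[μ] fun _ => (0:ℝ) := by
          have := condExp_smul (μ := μ) (m := 𝔉 (i - 1)) L (ξ i)
          refine this.trans ?_
          filter_upwards [hmart i hi] with ω hω
          simp only [Pi.smul_apply, smul_eq_mul]
          rw [show (μ[ξ i | 𝔉 (i-1)]) ω = (0:Ω→ℝ) ω from hω]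
          simp
        have h7 : μ[fun ω => H * κ i ω | 𝔉 (i - 1)] =ᵐ[μ] fun ω => H * C i ω := by
          have := condExp_smul (μ := μ) (m := 𝔉 (i - 1)) H (κ i)
          refine this.trans ?_
          exact Filter.Eventually.of_forall fun ω => by
            simp only [Pi.smul_apply, smul_eq_mul, hCdef]
        filter_upwards [h3, h4, h6, h7] with ω e3 e4 e6 e7
        rw [e3]
        simp only [Pi.add_apply] at *
        rw [e4, e6, e7, h5]
        simp
      filter_upwards [h1, h2] with ω e1 e2
      rw [← e2]; exact e1
    filter_upwards [hpull, hcondD] with ω e1 e2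
    rw [e1]
    simp only [Pi.mul_apply, Pi.one_apply]
    set z := H * C i ω with hz
    have h8 : 1 + z ≤ Real.exp z := by
      have := Real.add_one_le_exp z; linarith
    calc Real.exp (-z) * (μ[D i | 𝔉 (i - 1)]) ω ≤ Real.exp (-z) * (1 + z) :=
          mul_le_mul_of_nonneg_left e2 (Real.exp_pos _).le
      _ ≤ Real.exp (-z) * Real.exp z :=
          mul_le_mul_of_nonneg_left h8 (Real.exp_pos _).le
      _ = 1 := by rw [← Real.exp_add]; simp
  -- the product supermartingale
  have hMpos : ∀ k ω, 0 < M k ω := by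
    intro k ω; rw [hMdef]; dsimp only
    exact Finset.prod_pos fun i _ => hGpos i ω
  have hMm : ∀ k, StronglyMeasurable[𝔉 k] (M k) := by
    intro k
    rw [hMdef]
    apply Measurable.stronglyMeasurable
    apply Finset.measurable_prod
    intro i hi
    simp only [Finset.mem_Icc] at hi
    have h1 : 𝔉 (i - 1) ≤ 𝔉 k := hmono (by omega)
    have h2 : 𝔉 i ≤ 𝔉 k := hmono (by omega)
    rw [hGdef]; dsimp only
    refine Measurable.mul ?_ ?_
    · exact ((measurable_const.mul ((hCm i).measurable.mono h1 le_rfl)).neg).exp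
    · rw [hDdef]; dsimp only
      exact ((measurable_const.mul ((hadp i).measurable.mono h2 le_rfl)).sub
        (measurable_const.mul (((hτm i).measurable.mono h2 le_rfl)))).exp
  have hMlint : ∀ k, ∫⁻ ω, ENNReal.ofReal (M k ω) ∂μ ≤ 1 := by
    intro k
    induction k with
    | zero =>
      have : ∀ ω, M 0 ω = 1 := by
        intro ω; rw [hMdef]; simp
      simp only [this, ENNReal.ofReal_one, lintegral_one, measure_univ, le_refl]
    | succ k ih =>
      have hstep : ∀ ω, M (k + 1) ω = M k ω * G (k + 1) ω := by
        intro ω; rw [hMdef]; dsimp only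
        rw [← Finset.insert_Icc_right_eq_Icc_add_one (by omega : 1 ≤ k + 1),
          Finset.prod_insert (by simp)]
        ring
      have hcond' : μ[G (k + 1) | 𝔉 k] ≤ᵐ[μ] 1 := hGcond (k + 1) (by omega)
      calc ∫⁻ ω, ENNReal.ofReal (M (k + 1) ω) ∂μ
          = ∫⁻ ω, ENNReal.ofReal (M k ω * G (k + 1) ω) ∂μ := by
            congr 1; funext ω; rw [hstep ω]
        _ ≤ ∫⁻ ω, ENNReal.ofReal (M k ω) ∂μ :=
            lintegral_mul_le_of_condexp_le_one (hle k) (hMm k)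
              (fun ω => (hMpos k ω).le) (fun ω => (hGpos (k + 1) ω).le)
              (hGint (k + 1)) hcond'
        _ ≤ 1 := ih
  -- rewrite B in terms of τ and C
  have hB' : B = fun ω => (∑ i ∈ Finset.Icc 1 n, τ i ω) + ∑ i ∈ Finset.Icc 1 n, C i ω := by
    rw [hB]
  have hSm : Measurable[m] S := by
    rw [hS]; exact Finset.measurable_sum _ fun i _ => (hξm i).measurable
  have hBm : Measurable[m] B := by
    rw [hB']
    apply Measurable.add
    · exact Finset.measurable_sum _ fun i _ => ((hτm i).mono (hle i)).measurable
    · exact Finset.measurable_sum _ fun i _ => ((hCm i).mono (hle _)).measurable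
  set A := {ω | x * B ω ≤ S ω} with hAdef
  have hA : MeasurableSet A := measurableSet_le (measurable_const.mul hBm) hSm
  have hBnn : 0 ≤ᵐ[μ] B := by
    have hall : ∀ᵐ ω ∂μ, ∀ i ∈ Finset.Icc 1 n, 0 ≤ C i ω :=
      (Finset.eventually_all _).2 fun i _ => hCnn i
    filter_upwards [hall] with ω hω
    rw [hB']
    exact add_nonneg (Finset.sum_nonneg fun i _ => hτnn i ω) (Finset.sum_nonneg hω)
  have hMn_eq : ∀ ω, M n ω = Real.exp (L * S ω - H * B ω) := by
    intro ω
    have h1 : ∀ i ∈ Finset.Icc 1 n, G i ω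
        = Real.exp (L * ξ i ω - H * τ i ω - H * C i ω) := by
      intro i _
      rw [hGdef, hDdef]; dsimp only
      rw [← Real.exp_add]; congr 1; ring
    rw [hMdef]; dsimp only
    rw [Finset.prod_congr rfl h1, ← Real.exp_sum]
    congr 1
    rw [hS, hB']; dsimp only
    rw [Finset.sum_sub_distrib, Finset.sum_sub_distrib,
      ← Finset.mul_sum, ← Finset.mul_sum, ← Finset.mul_sum]
    ring
  set z : Ω → ℝ := fun ω => f x y * B ω with hzdef
  have hexp_le : ∀ ω ∈ A, z ω ≤ L * S ω - H * B ω := by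
    intro ω hω
    have hfeq : f x y = L * x - H := f_eq hx hy
    have h2 : x * B ω ≤ S ω := hω
    rw [hzdef]; dsimp only
    rw [hfeq]
    nlinarith [mul_le_mul_of_nonneg_left h2 hL]
  have hclaim2 : ∫⁻ ω in A, ENNReal.ofReal (Real.exp (z ω)) ∂μ ≤ 1 := by
    have hle1 : ∫⁻ ω in A, ENNReal.ofReal (Real.exp (z ω)) ∂μ
        ≤ ∫⁻ ω in A, ENNReal.ofReal (M n ω) ∂μ := by
      refine lintegral_mono_ae ?_
      filter_upwards [ae_restrict_mem hA] with ω hω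
      exact ENNReal.ofReal_le_ofReal
        (by rw [hMn_eq ω]; exact Real.exp_le_exp.2 (hexp_le ω hω))
    exact hle1.trans ((setLIntegral_le_lintegral A _).trans (hMlint n))
  -- Hölder
  have hp0 : (0:ℝ) < p := by linarith
  have hp1 : (0:ℝ) < p - 1 := by linarith
  set q := p / (p - 1) with hqdef
  have hq0 : (0:ℝ) < q := by rw [hqdef]; positivity
  have hpq : p.HolderConjugate q := Real.HolderConjugate.conjExponent hp
  have hzm : Measurable z := measurable_const.mul hBm
  set F₁ : Ω → ℝ≥0∞ :=
    fun ω => A.indicator (fun ω => ENNReal.ofReal (Real.exp (-((p-1)/p) * z ω))) ω with hF₁def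
  set F₂ : Ω → ℝ≥0∞ :=
    fun ω => A.indicator (fun ω => ENNReal.ofReal (Real.exp (((p-1)/p) * z ω))) ω with hF₂def
  have hF₁m : Measurable F₁ :=
    (ENNReal.measurable_ofReal.comp (measurable_const.mul hzm).exp).indicator hA
  have hF₂m : Measurable F₂ :=
    (ENNReal.measurable_ofReal.comp (measurable_const.mul hzm).exp).indicator hA
  have hmulEq : ∀ ω, F₁ ω * F₂ ω = A.indicator (fun _ => (1:ℝ≥0∞)) ω := by
    intro ω
    rw [hF₁def, hF₂def]; dsimp only
    by_cases hω : ω ∈ A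
    · rw [Set.indicator_of_mem hω, Set.indicator_of_mem hω, Set.indicator_of_mem hω,
        ← ENNReal.ofReal_mul (Real.exp_pos _).le, ← Real.exp_add]
      norm_num
    · rw [Set.indicator_of_notMem hω, Set.indicator_of_notMem hω,
        Set.indicator_of_notMem hω, zero_mul]
  have hF₁pow : ∀ ω, F₁ ω ^ p
      = A.indicator (fun ω => ENNReal.ofReal (Real.exp (-(p-1) * z ω))) ω := by
    intro ω
    rw [hF₁def]; dsimp only
    by_cases hω : ω ∈ A
    · rw [Set.indicator_of_mem hω, Set.indicator_of_mem hω,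
        ENNReal.ofReal_rpow_of_nonneg (Real.exp_pos _).le hp0.le]
      congr 1
      rw [← Real.exp_mul]
      congr 1
      field_simp
    · rw [Set.indicator_of_notMem hω, Set.indicator_of_notMem hω]
      exact ENNReal.zero_rpow_of_pos hp0
  have hF₂pow : ∀ ω, F₂ ω ^ q
      = A.indicator (fun ω => ENNReal.ofReal (Real.exp (z ω))) ω := by
    intro ω
    rw [hF₂def]; dsimp only
    by_cases hω : ω ∈ A
    · rw [Set.indicator_of_mem hω, Set.indicator_of_mem hω,
        ENNReal.ofReal_rpow_of_nonneg (Real.exp_pos _).le hq0.le]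
      congr 1
      rw [← Real.exp_mul]
      congr 1
      rw [hqdef]
      field_simp
    · rw [Set.indicator_of_notMem hω, Set.indicator_of_notMem hω]
      exact ENNReal.zero_rpow_of_pos hq0
  have hmain : μ A ≤ (∫⁻ ω in A, ENNReal.ofReal (Real.exp (-(p-1) * z ω)) ∂μ) ^ (1/p) := by
    calc μ A = ∫⁻ ω, A.indicator (fun _ => (1:ℝ≥0∞)) ω ∂μ := by
          rw [lintegral_indicator hA]
          simp [lintegral_const]
      _ = ∫⁻ ω, F₁ ω * F₂ ω ∂μ := by
          congr 1; funext ω; rw [hmulEq ω]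
      _ = ∫⁻ ω, (F₁ * F₂) ω ∂μ := rfl
      _ ≤ (∫⁻ ω, F₁ ω ^ p ∂μ) ^ (1/p) * (∫⁻ ω, F₂ ω ^ q ∂μ) ^ (1/q) :=
          ENNReal.lintegral_mul_le_Lp_mul_Lq μ hpq hF₁m.aemeasurable hF₂m.aemeasurable
      _ = (∫⁻ ω in A, ENNReal.ofReal (Real.exp (-(p-1) * z ω)) ∂μ) ^ (1/p)
          * (∫⁻ ω in A, ENNReal.ofReal (Real.exp (z ω)) ∂μ) ^ (1/q) := by
          congr 1
          · congr 1
            rw [← lintegral_indicator hA]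
            congr 1; funext ω; rw [hF₁pow ω]
          · congr 1
            rw [← lintegral_indicator hA]
            congr 1; funext ω; rw [hF₂pow ω]
      _ ≤ (∫⁻ ω in A, ENNReal.ofReal (Real.exp (-(p-1) * z ω)) ∂μ) ^ (1/p) * 1 ^ (1/q) := by
          apply mul_le_mul_right
          exact ENNReal.rpow_le_rpow hclaim2 (by positivity)
      _ = (∫⁻ ω in A, ENNReal.ofReal (Real.exp (-(p-1) * z ω)) ∂μ) ^ (1/p) := by
          rw [ENNReal.one_rpow, mul_one]
  -- convert to Bochner integral
  have hint : IntegrableOn (fun ω => Real.exp (-(p - 1) * f x y * B ω)) A μ := by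
    refine Integrable.mono' (integrable_const 1)
      ((measurable_const.mul hBm).exp).aestronglyMeasurable ?_
    filter_upwards [ae_restrict_of_ae hBnn] with ω hω
    simp only [Pi.zero_apply] at hω
    rw [Real.norm_eq_abs, abs_of_pos (Real.exp_pos _), Real.exp_le_one_iff]
    have hf0 := f_nonneg hx hy
    nlinarith [mul_nonneg (mul_nonneg hp1.le hf0) hω]
  have heqI : ∫⁻ ω in A, ENNReal.ofReal (Real.exp (-(p-1) * z ω)) ∂μ
      = ENNReal.ofReal (∫ ω in A, Real.exp (-(p - 1) * f x y * B ω) ∂μ) := by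
    have h0 : ∀ ω, Real.exp (-(p-1) * z ω) = Real.exp (-(p - 1) * f x y * B ω) := by
      intro ω; rw [hzdef]; dsimp only; congr 1; ring
    calc ∫⁻ ω in A, ENNReal.ofReal (Real.exp (-(p-1) * z ω)) ∂μ
        = ∫⁻ ω in A, ENNReal.ofReal (Real.exp (-(p - 1) * f x y * B ω)) ∂μ := by
          congr 1; funext ω; rw [h0 ω]
      _ = ENNReal.ofReal (∫ ω in A, Real.exp (-(p - 1) * f x y * B ω) ∂μ) :=
          (ofReal_integral_eq_lintegral_ofReal hint
            (Filter.Eventually.of_forall fun ω => (Real.exp_pos _).le)).symm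
  rw [heqI] at hmain
  have hI0 : 0 ≤ ∫ ω in A, Real.exp (-(p - 1) * f x y * B ω) ∂μ :=
    integral_nonneg fun ω => (Real.exp_pos _).le
  have htop : (ENNReal.ofReal (∫ ω in A, Real.exp (-(p - 1) * f x y * B ω) ∂μ)) ^ (1/p) ≠ ⊤ :=
    ENNReal.rpow_ne_top_of_nonneg (by positivity) ENNReal.ofReal_ne_top
  have hfin := ENNReal.toReal_mono htop hmain
  rwa [← ENNReal.toReal_rpow, ENNReal.toReal_ofReal hI0] at hfin
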